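/- arXiv:2308.05293 — 3 statements merged into one kernel-verified Lean document; each statement's English description precedes it below -/
import Mathlib

section
/- Let K_n be the complete graph on vertices P_1, …, P_n with n ≥ 4, and let D = P_1 + ⋯ + P_n. Then for every vertex P, the rank of D − P equals 1. -/
open scoped Classical

namespace GraphDiv

variable {V : Type*}

/-- The Laplacian divisor of an integer-valued function on the vertices. -/
noncomputable def lap (G : SimpleGraph V) [Fintype V] (f : V → ℤ) : V → ℤ :=
  fun P => ∑ Q : V, if G.Adj P Q then f P - f Q else 0

/-- Linear equivalence of divisors: `D ∼ D'` iff `D - D' = Δ(f)` for some `f`. -/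
def LinEquiv (G : SimpleGraph V) [Fintype V] (D D' : V → ℤ) : Prop :=
  ∃ f : V → ℤ, D - D' = lap G f

/-- A divisor is effective if all its coefficients are nonnegative. -/
def Effective (D : V → ℤ) : Prop := ∀ P, 0 ≤ D P

/-- The degree of a divisor. -/
def degDiv [Fintype V] (D : V → ℤ) : ℤ := ∑ P : V, D P

/-- The complete linear system of a divisor. -/
def linSys (G : SimpleGraph V) [Fintype V] (D : V → ℤ) : Set (V → ℤ) :=
  {E | Effective E ∧ LinEquiv G E D}

/-- `RankEq G D r` says the Baker–Norine rank of `D` equals `r`. -/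
def RankEq (G : SimpleGraph V) [Fintype V] (D : V → ℤ) (r : ℤ) : Prop :=
  -1 ≤ r ∧
  (∀ E : V → ℤ, Effective E → degDiv E ≤ r → (linSys G (D - E)).Nonempty) ∧
  ∃ E : V → ℤ, Effective E ∧ degDiv E = r + 1 ∧ linSys G (D - E) = ∅

/-- The divisor consisting of a single vertex. -/
noncomputable def unit (P : V) : V → ℤ := fun Q => if Q = P then 1 else 0

/-- A graph is 2-edge-connected if it is connected and stays connected
after removing any single edge. -/
def TwoEdgeConnected (G : SimpleGraph V) : Prop :=
  G.Connected ∧ ∀ v w : V, G.Adj v w → (G.deleteEdges {s(v, w)}).Connected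

/-- Action of a graph automorphism on divisors. -/
def divAct {G : SimpleGraph V} (σ : G ≃g G) (D : V → ℤ) : V → ℤ :=
  fun v => D (σ.symm v)

/-- Two vertices lie in the same orbit of a subgroup of automorphisms. -/
def vrel {G : SimpleGraph V} (H : Subgroup (G ≃g G)) (v w : V) : Prop :=
  ∃ σ ∈ H, σ v = w

/-- An edge is collapsed in the quotient: its endpoints lie in the same vertex orbit. -/
def Collapsed {G : SimpleGraph V} (H : Subgroup (G ≃g G)) (e : Sym2 V) : Prop :=
  ∃ a b : V, e = s(a, b) ∧ vrel H a b

/-- The quotient morphism `G → G/H` is harmonic: for every vertex `P`, the number of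
edges at `P` lying above a given non-collapsed edge-orbit incident to the class of `P`
is independent of the choice of that edge-orbit. -/
def QuotHarmonic (G : SimpleGraph V) (H : Subgroup (G ≃g G)) : Prop :=
  ∀ (P : V) (e₁ e₂ : Sym2 V), e₁ ∈ G.edgeSet → e₂ ∈ G.edgeSet →
    (∃ σ ∈ H, P ∈ Sym2.map (⇑σ) e₁) → (∃ σ ∈ H, P ∈ Sym2.map (⇑σ) e₂) →
    ¬ Collapsed H e₁ → ¬ Collapsed H e₂ →
    Nat.card {e : Sym2 V // e ∈ G.edgeSet ∧ P ∈ e ∧ ∃ σ ∈ H, Sym2.map (⇑σ) e = e₁} =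
    Nat.card {e : Sym2 V // e ∈ G.edgeSet ∧ P ∈ e ∧ ∃ σ ∈ H, Sym2.map (⇑σ) e = e₂}

/-- `H` acts harmonically on `G`: for every subgroup `Δ ≤ H` the quotient morphism
`G → G/Δ` is harmonic. -/
def HarmonicAction (G : SimpleGraph V) (H : Subgroup (G ≃g G)) : Prop :=
  ∀ Δ : Subgroup (G ≃g G), Δ ≤ H → QuotHarmonic G Δ

/-- `P` is a Galois point with respect to `|D|`. -/
def IsGaloisPoint (G : SimpleGraph V) [Fintype V] (D : V → ℤ) (P : V) : Prop :=
  RankEq G (D - unit P) 1 ∧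
  (∀ Q : V, RankEq G (D - unit P - unit Q) 0) ∧
  ∃ H : Subgroup (G ≃g G), (Nat.card H : ℤ) = degDiv D - 1 ∧
    (∃ v w : V, ¬ vrel H v w) ∧
    HarmonicAction G H ∧
    ∃ E₁ E₂ : V → ℤ, E₁ ≠ E₂ ∧ E₁ ∈ linSys G (D - unit P) ∧ E₂ ∈ linSys G (D - unit P) ∧
      ∀ σ ∈ H, divAct σ E₁ = E₁ ∧ divAct σ E₂ = E₂

/-- A divisor is `q`-reduced. -/
def QReduced (G : SimpleGraph V) [Fintype V] (q : V) (D : V → ℤ) : Prop :=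
  (∀ P : V, P ≠ q → 0 ≤ D P) ∧
  ∀ S : Finset V, S.Nonempty → q ∉ S →
    ∃ P ∈ S, D P < (((G.neighborFinset P).filter (fun Q => Q ∉ S)).card : ℤ)

/-- The wheel graph on `m + 1` vertices: hub `none` and rim `some i` for `i : Fin m`,
with the rim a cycle via `i ↦ i + 1 (mod m)`. -/
def wheel (m : ℕ) : SimpleGraph (Option (Fin m)) where
  Adj v w :=
    match v, w with
    | none, none => False
    | none, some _ => True
    | some _, none => True
    | some i, some j => i ≠ j ∧ ((i.val + 1) % m = j.val ∨ (j.val + 1) % m = i.val)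
  symm := ⟨by
    intro v w h
    cases v <;> cases w <;> simp_all <;> tauto⟩
  loopless := ⟨by intro v; cases v <;> simp⟩

/-- The 4-cycle `P₁P₂P₃P₄` with the chord `P₁P₃` (vertices `0,1,2,3`). -/
def g4 : SimpleGraph (Fin 4) :=
  SimpleGraph.fromRel (fun v w =>
    (v = 0 ∧ w = 1) ∨ (v = 1 ∧ w = 2) ∨ (v = 2 ∧ w = 3) ∨ (v = 3 ∧ w = 0) ∨ (v = 0 ∧ w = 2))

end GraphDiv


open GraphDiv in
lemma lap_top_eq (n : ℕ) (f : Fin n → ℤ) (v : Fin n) :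
    lap (⊤ : SimpleGraph (Fin n)) f v = (n : ℤ) * f v - ∑ w, f w := by
  unfold lap
  refine Eq.trans (Finset.sum_congr rfl (fun w _ => show _ = f v - f w from ?_)) ?_
  · by_cases h : v = w
    · subst h
      rw [if_neg (by simp)]
      ring
    · exact if_pos (by simp [SimpleGraph.top_adj, h])
  · rw [Finset.sum_sub_distrib]
    simp [Finset.card_univ, mul_comm]

open GraphDiv in
lemma sum_unit_eq (n : ℕ) (R : Fin n) (hn : 0 < n) : (∑ x : Fin n, unit R x) = 1 := by
  rw [Finset.sum_eq_single R]
  · exact if_pos rfl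
  · intro b _ hb
    exact if_neg hb
  · intro h
    exact absurd (Finset.mem_univ R) h

open GraphDiv in
/-- On `K_n` (`n ≥ 4`), `r(D - P) = 1` for every vertex `P`. -/
theorem stmt5 (n : ℕ) (hn : 4 ≤ n) (P : Fin n) :
    RankEq (⊤ : SimpleGraph (Fin n)) ((fun _ => 1) - unit P) 1 := by
  have hn' : (4 : ℤ) ≤ (n : ℤ) := by exact_mod_cast hn
  refine ⟨by norm_num, ?_, ?_⟩
  · -- every effective E of degree ≤ 1 can be subtracted
    intro E hE hdeg
    set f : Fin n → ℤ := fun v => if v = P then E P else 0 with hfdef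
    have hsumf : ∑ w, f w = E P := by
      simp [hfdef, Finset.sum_ite_eq']
    refine ⟨fun v => (1 - unit P v - E v) + lap (⊤ : SimpleGraph (Fin n)) f v,
      ?_, f, ?_⟩
    · intro v
      show 0 ≤ 1 - unit P v - E v + lap (⊤ : SimpleGraph (Fin n)) f v
      rw [lap_top_eq, hsumf]
      by_cases hv : v = P
      · have h1 : unit P v = 1 := if_pos hv
        have h2 : f v = E P := if_pos hv
        rw [h1, h2, hv]
        have hEv : 0 ≤ E P := hE P
        nlinarith
      · have hpair : E v + E P ≤ degDiv E := by
          have hsub : ({v, P} : Finset (Fin n)) ⊆ Finset.univ := Finset.subset_univ _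
          have := Finset.sum_le_sum_of_subset_of_nonneg hsub
            (fun i _ _ => hE i)
          rwa [Finset.sum_pair hv] at this
        have h1 : E v + E P ≤ 1 := le_trans hpair hdeg
        have h2 : unit P v = 0 := if_neg hv
        have h3 : f v = 0 := if_neg hv
        rw [h2, h3]
        linarith
    · funext v
      simp only [Pi.sub_apply]
      ring
  · -- witness of degree 2 with empty linear system
    have : Nontrivial (Fin n) := Fin.nontrivial_iff_two_le.mpr (by omega)
    obtain ⟨Q, hQP⟩ : ∃ Q : Fin n, Q ≠ P := exists_ne P
    refine ⟨fun v => unit P v + unit Q v, ?_, ?_, ?_⟩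
    · intro v
      simp only [unit]
      split_ifs <;> norm_num
    · show (∑ v : Fin n, (unit P v + unit Q v)) = 1 + 1
      rw [Finset.sum_add_distrib, sum_unit_eq n P (by omega), sum_unit_eq n Q (by omega)]
    · -- emptiness
      ext E'
      simp only [Set.mem_empty_iff_false, iff_false]
      rintro ⟨hEff, f, hf⟩
      set μ : Fin n → ℤ := ((fun _ => 1) - unit P) - (fun v => unit P v + unit Q v) with hμ
      have hval : ∀ v : Fin n,
          μ v = 1 - unit P v - (unit P v + unit Q v) := fun v => rfl
      have hu1 : ∀ R : Fin n, unit R R = 1 := fun R => if_pos rfl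
      have hu0 : ∀ R v : Fin n, v ≠ R → unit R v = 0 := fun R v h => if_neg h
      have hμP : μ P = -1 := by
        have e1 := hu1 P
        have e2 := hu0 Q P (Ne.symm hQP)
        rw [hval P, e1, e2]; ring
      have hμQ : μ Q = 0 := by
        have e1 := hu0 P Q hQP
        have e2 := hu1 Q
        rw [hval Q, e1, e2]; ring
      have hμother : ∀ v, v ≠ P → v ≠ Q → μ v = 1 := by
        intro v h1 h2
        have e1 := hu0 P v h1
        have e2 := hu0 Q v h2
        rw [hval v, e1, e2]; ring
      obtain ⟨v₀, -, hmin⟩ := Finset.exists_min_image Finset.univ f ⟨P, Finset.mem_univ P⟩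
      set M : Finset (Fin n) := Finset.univ.filter (fun v => f v = f v₀) with hM
      set k : ℕ := M.card with hk
      set s : ℤ := ∑ w, f w with hs
      -- card facts
      have hcards : k + (Finset.univ.filter (fun v => ¬ f v = f v₀)).card = n := by
        rw [hk, Finset.card_filter_add_card_filter_not]
        simp
      have hT : (n : ℤ) * f v₀ - s ≤ (k : ℤ) - (n : ℤ) := by
        have hsplit : (n : ℤ) * f v₀ - s = ∑ w, (f v₀ - f w) := by
          rw [Finset.sum_sub_distrib, hs]
          simp [Finset.card_univ, mul_comm]
        rw [hsplit, ← Finset.sum_filter_add_sum_filter_not Finset.univ (fun v => f v = f v₀)]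
        have h0 : ∑ w ∈ Finset.univ.filter (fun v => f v = f v₀), (f v₀ - f w) = 0 := by
          apply Finset.sum_eq_zero
          intro w hw
          have : f w = f v₀ := (Finset.mem_filter.mp hw).2
          omega
        rw [h0, zero_add]
        calc ∑ w ∈ Finset.univ.filter (fun v => ¬ f v = f v₀), (f v₀ - f w)
            ≤ ∑ w ∈ Finset.univ.filter (fun v => ¬ f v = f v₀), (-1 : ℤ) := by
              apply Finset.sum_le_sum
              intro w hw
              have h1 : ¬ f w = f v₀ := (Finset.mem_filter.mp hw).2
              have h2 : f v₀ ≤ f w := hmin w (Finset.mem_univ w)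
              omega
          _ = (k : ℤ) - (n : ℤ) := by
              rw [Finset.sum_const]
              have := hcards
              push_cast [← this]
              ring
      have hKey : ∀ v ∈ M, (n : ℤ) - (k : ℤ) ≤ μ v := by
        intro v hv
        have hfv : f v = f v₀ := (Finset.mem_filter.mp hv).2
        have h0 : 0 ≤ E' v := hEff v
        have h1 : E' v - μ v = lap (⊤ : SimpleGraph (Fin n)) f v := congrFun hf v
        rw [lap_top_eq, hfv, ← hs] at h1
        omega
      have hkn : k ≤ n := by omega
      have hPM : P ∉ M := by
        intro h
        have := hKey P h
        rw [hμP] at this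
        omega
      have hQM : Q ∉ M := by
        intro h
        have h1 := hKey Q h
        rw [hμQ] at h1
        -- k ≥ n, so M = univ, so P ∈ M
        have hkeq : k = n := by omega
        have : M = Finset.univ := by
          apply Finset.eq_univ_of_card
          have h2 : M.card = k := hk.symm
          simp only [Fintype.card_fin]
          omega
        exact hPM (this ▸ Finset.mem_univ P)
      have hv₀M : v₀ ∈ M := by
        rw [hM]
        simp
      have hv₀P : v₀ ≠ P := fun h => hPM (h ▸ hv₀M)
      have hv₀Q : v₀ ≠ Q := fun h => hQM (h ▸ hv₀M)
      have h1 := hKey v₀ hv₀M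
      rw [hμother v₀ hv₀P hv₀Q] at h1
      -- so k ≥ n - 1, but M ⊆ univ \ {P, Q}, so k ≤ n - 2
      have hsub : M ⊆ Finset.univ \ ({P, Q} : Finset (Fin n)) := by
        intro v hv
        rw [Finset.mem_sdiff]
        refine ⟨Finset.mem_univ v, ?_⟩
        intro h
        rcases Finset.mem_insert.mp h with rfl | h2
        · exact hPM hv
        · rw [Finset.mem_singleton] at h2
          subst h2
          exact hQM hv
      have hk2 : k ≤ n - 2 := by
        have := Finset.card_le_card hsub
        rw [Finset.card_sdiff_of_subset (Finset.subset_univ _), Finset.card_pair (Ne.symm hQP)] at this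
        simpa [hk, Finset.card_univ] using this
      omega
end

section
/- Let K_n be the complete graph on vertices P_1, …, P_n with n ≥ 4, and let D = P_1 + ⋯ + P_n. Then for all vertices P, Q (possibly equal), the rank of D − P − Q equals 0. -/
open scoped Classical

open GraphDiv Finset in
lemma lap_top_apply (n : ℕ) (f : Fin n → ℤ) (v : Fin n) :
    lap (⊤ : SimpleGraph (Fin n)) f v = n * f v - ∑ w, f w := by
  unfold lap
  trans (∑ w : Fin n, (f v - f w))
  · refine Finset.sum_congr rfl fun w _ => ?_
    split_ifs with h
    · rfl
    · simp only [SimpleGraph.top_adj, not_not] at h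
      rw [h, sub_self]
  · rw [Finset.sum_sub_distrib, Finset.sum_const, Finset.card_univ, Fintype.card_fin,
      nsmul_eq_mul]

open GraphDiv Finset in
lemma sum_unit {n : ℕ} [NeZero n] (R : Fin n) : ∑ w : Fin n, unit R w = 1 := by
  unfold unit
  rw [Finset.sum_eq_single R]
  · simp
  · intro w _ hw
    simp [hw]
  · intro h
    exact absurd (Finset.mem_univ R) h

open GraphDiv in
lemma effective_unit {V : Type*} (P : V) : Effective (unit P) := by
  intro v
  unfold unit
  split_ifs <;> norm_num

open GraphDiv Finset in
lemma linSys_top_empty {n : ℕ} (hn : 4 ≤ n) (D0 : Fin n → ℤ) (a b : Fin n) (hab : a ≠ b)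
    (ha : D0 a ≤ -1) (hb : D0 b ≤ 0) (hle : ∀ v, D0 v ≤ 1) :
    linSys (⊤ : SimpleGraph (Fin n)) D0 = ∅ := by
  ext E
  simp only [Set.mem_empty_iff_false, iff_false, linSys, Set.mem_setOf_eq]
  rintro ⟨hEeff, f, hf⟩
  obtain ⟨v0, -, hv0⟩ := Finset.exists_min_image Finset.univ f ⟨a, Finset.mem_univ a⟩
  set S : ℤ := ∑ v, (f v - f v0) with hS
  have hkey : ∀ v, E v = D0 v + ((n : ℤ) * (f v - f v0) - S) := by
    intro v
    have h1 : E v - D0 v = lap ⊤ f v := congrFun hf v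
    rw [lap_top_apply] at h1
    have h2 : S = (∑ w, f w) - n * f v0 := by
      rw [hS, Finset.sum_sub_distrib, Finset.sum_const, Finset.card_univ, Fintype.card_fin,
        nsmul_eq_mul]
    have h3 : (n : ℤ) * (f v - f v0) - S = n * f v - ∑ w, f w := by rw [h2]; ring
    linarith [h1, h3]
  have hg : ∀ v, 0 ≤ f v - f v0 := fun v => sub_nonneg.mpr (hv0 v (Finset.mem_univ v))
  have hS0 : 0 ≤ S := Finset.sum_nonneg fun v _ => hg v
  have hS1 : S ≤ 1 := by
    have h1 := hEeff v0
    rw [hkey v0] at h1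
    have h2 := hle v0
    simp only [sub_self, mul_zero, zero_sub] at h1
    linarith
  have hpair : (f a - f v0) + (f b - f v0) ≤ S := by
    have h1 : ∑ v ∈ ({a, b} : Finset (Fin n)), (f v - f v0) = (f a - f v0) + (f b - f v0) :=
      Finset.sum_pair hab
    rw [← h1]
    exact Finset.sum_le_sum_of_subset_of_nonneg (Finset.subset_univ _) (fun v _ _ => hg v)
  have hEa := hEeff a
  rw [hkey a] at hEa
  have hga1 : 1 ≤ f a - f v0 := by
    by_contra h
    push_neg at h
    have h0 : f a - f v0 = 0 := le_antisymm (by omega) (hg a)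
    rw [h0, mul_zero] at hEa
    linarith
  have hEb := hEeff b
  rw [hkey b] at hEb
  have hgb1 : 1 ≤ f b - f v0 := by
    by_contra h
    push_neg at h
    have h0 : f b - f v0 = 0 := le_antisymm (by omega) (hg b)
    rw [h0, mul_zero] at hEb
    have : f a - f v0 ≤ S := by linarith [hg b, hpair]
    linarith
  linarith

open GraphDiv in
/-- On `K_n` (`n ≥ 4`), `r(D - P - Q) = 0` for all vertices `P, Q`. -/
theorem stmt6 (n : ℕ) (hn : 4 ≤ n) (P Q : Fin n) :
    RankEq (⊤ : SimpleGraph (Fin n)) ((fun _ => 1) - unit P - unit Q) 0 := by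
  haveI : NeZero n := ⟨by omega⟩
  have hnZ : (4 : ℤ) ≤ n := by exact_mod_cast hn
  haveI hnontriv : Nontrivial (Fin n) := ⟨⟨0, 1, by simp [Fin.ext_iff]; omega⟩⟩
  refine ⟨by norm_num, ?_, ?_⟩
  · intro E hE hdeg
    have hE0 : E = 0 := by
      funext v
      have h := (Finset.sum_eq_zero_iff_of_nonneg (fun v _ => hE v)).mp
        (le_antisymm hdeg (Finset.sum_nonneg fun v _ => hE v)) v (Finset.mem_univ v)
      simpa using h
    subst hE0
    rw [sub_zero]
    by_cases hPQ : P = Q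
    · subst hPQ
      refine ⟨(fun _ => 1) - unit P - unit P + lap ⊤ (unit P), ?_, unit P, by ring⟩
      intro v
      simp only [Pi.add_apply, Pi.sub_apply, lap_top_apply, sum_unit]
      by_cases hv : v = P
      · subst hv
        simp only [unit, eq_self_iff_true, if_true]
        linarith
      · simp only [unit, if_neg hv]
        norm_num
    · refine ⟨(fun _ => 1) - unit P - unit Q, ?_, 0, by funext v; simp [lap]⟩
      intro v
      simp only [Pi.sub_apply, unit]
      split_ifs with h1 h2
      · exact absurd (h1.symm.trans h2) hPQ
      all_goals norm_num
  · by_cases hPQ : P = Q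
    · subst hPQ
      obtain ⟨y, hy⟩ := exists_ne P
      have hyP : ¬ (P = y) := fun h => hy h.symm
      refine ⟨unit y, effective_unit y, by rw [show ((0:ℤ) + 1) = 1 by norm_num]; exact sum_unit y, ?_⟩
      refine linSys_top_empty hn _ P y (Ne.symm hy) ?_ ?_ ?_
      · norm_num [Pi.sub_apply, unit, hyP]
      · norm_num [Pi.sub_apply, unit, hy]
      · intro v
        simp only [Pi.sub_apply, unit]
        split_ifs <;> norm_num
    · refine ⟨unit Q, effective_unit Q, by rw [show ((0:ℤ) + 1) = 1 by norm_num]; exact sum_unit Q, ?_⟩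
      have hQP : ¬ (Q = P) := fun h => hPQ h.symm
      refine linSys_top_empty hn _ Q P (Ne.symm hPQ) ?_ ?_ ?_
      · norm_num [Pi.sub_apply, unit, hQP, hPQ]
      · norm_num [Pi.sub_apply, unit, hPQ, hQP]
      · intro v
        simp only [Pi.sub_apply, unit]
        split_ifs <;> norm_num
end

section
/- Let W_n be the wheel graph on vertices P_1, …, P_n with n ≥ 5, where P_1 is the hub. Then the linear system |(n−1)P_1 − 2P_2| is empty; that is, there is no f : V(W_n) → ℤ such that Δ(f) + (n−1)P_1 − 2P_2 is effective. -/
open scoped Classical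

namespace GraphDiv

lemma lap_none' (m : ℕ) (f : Option (Fin m) → ℤ) :
    lap (wheel m) f none = ∑ i : Fin m, (f none - f (some i)) := by
  simp [lap, Fintype.sum_option, wheel]

lemma adj_some_iff (k : ℕ) (i j : Fin (k+4)) :
    (wheel (k+4)).Adj (some i) (some j) ↔ j = i + 1 ∨ j = i - 1 := by
  have hlt := i.isLt
  have hlt' := j.isLt
  have e1 : ((i : ℕ) + 1) % (k+4) = if (i : ℕ) + 1 = k + 4 then 0 else (i:ℕ) + 1 := by
    split
    · simp [*]
    · exact Nat.mod_eq_of_lt (by omega)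
  have e2 : ((j : ℕ) + 1) % (k+4) = if (j : ℕ) + 1 = k + 4 then 0 else (j:ℕ) + 1 := by
    split
    · simp [*]
    · exact Nat.mod_eq_of_lt (by omega)
  have hv1 : ((i + 1 : Fin (k+4)) : ℕ) = ((i : ℕ) + 1) % (k+4) := by
    rw [Fin.add_def]; simp [Fin.val_one]
  have hv2 : ((i - 1 : Fin (k+4)) : ℕ) = if (i:ℕ) = 0 then k + 3 else (i:ℕ) - 1 := by
    rw [Fin.sub_def]
    simp only [Fin.val_one]
    split
    · rename_i h; rw [h]; exact Nat.mod_eq_of_lt (by omega)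
    · rename_i h
      have : (k + 4 - 1) + (i:ℕ) = (k+4) + ((i:ℕ) - 1) := by omega
      rw [this, Nat.add_mod_left]
      exact Nat.mod_eq_of_lt (by omega)
  show (i ≠ j ∧ _) ↔ _
  rw [Fin.ne_iff_vne, Fin.ext_iff, Fin.ext_iff, hv1, hv2, e1, e2]
  split_ifs <;> omega

lemma succ_ne_pred (k : ℕ) (i : Fin (k+4)) : i + 1 ≠ i - 1 := by
  intro h
  have h1 := congrArg Fin.val h
  rw [Fin.add_def, Fin.sub_def] at h1
  simp only [Fin.val_one] at h1
  have hlt := i.isLt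
  have e1 : ((i : ℕ) + 1) % (k+4) = if (i : ℕ) + 1 = k + 4 then 0 else (i:ℕ) + 1 := by
    split
    · simp [*]
    · exact Nat.mod_eq_of_lt (by omega)
  have e2 : ((k + 4 - 1) + (i:ℕ)) % (k+4) = if (i:ℕ) = 0 then k + 3 else (i:ℕ) - 1 := by
    split
    · rename_i hh; rw [hh]; exact Nat.mod_eq_of_lt (by omega)
    · have : (k + 4 - 1) + (i:ℕ) = (k+4) + ((i:ℕ) - 1) := by omega
      rw [this, Nat.add_mod_left]
      exact Nat.mod_eq_of_lt (by omega)
  rw [e1, e2] at h1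
  split_ifs at h1 <;> omega

lemma lap_some' (k : ℕ) (f : Option (Fin (k+4)) → ℤ) (i : Fin (k+4)) :
    lap (wheel (k+4)) f (some i) =
      (f (some i) - f none) + ((f (some i) - f (some (i+1))) + (f (some i) - f (some (i-1)))) := by
  have hne : (i + 1 : Fin (k+4)) ≠ i - 1 := succ_ne_pred k i
  have h0 : lap (wheel (k+4)) f (some i) = (f (some i) - f none) +
      ∑ j : Fin (k+4), if (wheel (k+4)).Adj (some i) (some j) then f (some i) - f (some j) else 0 := by
    simp [lap, Fintype.sum_option, wheel]
  rw [h0]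
  congr 1
  have h1 : ∀ j : Fin (k+4),
      (if (wheel (k+4)).Adj (some i) (some j) then f (some i) - f (some j) else 0) =
      (if j ∈ ({i+1, i-1} : Finset (Fin (k+4))) then f (some i) - f (some j) else 0) := by
    intro j
    rw [adj_some_iff]
    simp [Finset.mem_insert]
  rw [Finset.sum_congr rfl fun j _ => h1 j, Finset.sum_ite_mem, Finset.univ_inter,
    Finset.sum_pair hne]

open Fin.NatCast Fin.CommRing in
lemma walk_lemma (k : ℕ) (P : Fin (k+4) → Prop) (i₀ : Fin (k+4)) (hP : P i₀)
    (hstep : ∀ i, P i → P (i + 1)) : P 0 := by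
  have key : ∀ t : ℕ, P (i₀ + (t : Fin (k+4))) := by
    intro t
    induction t with
    | zero => simpa using hP
    | succ n ih =>
        have : (i₀ + ((n+1 : ℕ) : Fin (k+4))) = (i₀ + (n : Fin (k+4))) + 1 := by
          push_cast
          ring
        rw [this]
        exact hstep _ ih
  have h0 : i₀ + ((k + 4 - (i₀ : ℕ) : ℕ) : Fin (k+4)) = 0 := by
    apply Fin.ext
    rw [Fin.add_def, Fin.val_natCast]
    have hlt := i₀.isLt
    by_cases h : (i₀ : ℕ) = 0
    · rw [h]; simp
    · have e1 : (k + 4 - (i₀:ℕ)) % (k+4) = k + 4 - (i₀:ℕ) := Nat.mod_eq_of_lt (by omega)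
      rw [e1]
      have : (i₀:ℕ) + (k + 4 - (i₀:ℕ)) = k + 4 := by omega
      rw [this]
      simp
  have := key (k + 4 - (i₀ : ℕ))
  rwa [h0] at this

end GraphDiv

open GraphDiv in
/-- On the wheel `W_n` (`n = m + 1 ≥ 5`, hub `none`, `P₂ = some 0`), the linear
system `|(n-1)P₁ - 2P₂|` is empty. -/
theorem stmt8 (m : ℕ) (hm : 4 ≤ m) :
    ¬ ∃ f : Option (Fin m) → ℤ,
      Effective (lap (wheel m) f +
        fun v => match v with
          | none => (m : ℤ)
          | some i => if i = (⟨0, by omega⟩ : Fin m) then -2 else 0) := by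
  rintro ⟨f, hf⟩
  obtain ⟨k, rfl⟩ : ∃ k, m = k + 4 := ⟨m - 4, by omega⟩
  have hzero : (⟨0, by omega⟩ : Fin (k+4)) = 0 := rfl
  -- the shifted potential
  set h : Option (Fin (k+4)) → ℤ := fun v => Option.elim v (f none + 1) (fun i => f (some i))
    with hh
  obtain ⟨v₀, -, hv₀⟩ := Finset.exists_min_image Finset.univ h ⟨none, Finset.mem_univ _⟩
  set c := h v₀ with hc
  have hmin : ∀ v, c ≤ h v := fun v => hv₀ v (Finset.mem_univ v)
  have hminnone : c - 1 ≤ f none := by have := hmin none; simp [hh] at this; omega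
  have hminsome : ∀ i, c ≤ f (some i) := fun i => hmin (some i)
  -- effectiveness at the hub
  have Hnone : 0 ≤ (∑ i : Fin (k+4), (f none - f (some i))) + ((k:ℤ) + 4) := by
    have := hf none
    simp only [Pi.add_apply] at this
    rw [lap_none'] at this
    push_cast at this
    convert this using 2
  -- effectiveness at rim vertex i
  have Hsome : ∀ i : Fin (k+4), 0 ≤
      (f (some i) - f none) + ((f (some i) - f (some (i+1))) + (f (some i) - f (some (i-1)))) +
      (if i = 0 then -2 else 0) := by
    intro i
    have := hf (some i)
    simp only [Pi.add_apply] at this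
    rw [lap_some'] at this
    rw [hzero] at this
    exact this
  by_cases h0 : f (some 0) = c
  · -- minimum at P₂ : rim-0 inequality fails
    have := Hsome 0
    rw [if_pos rfl] at this
    have b1 := hminsome (0 + 1 : Fin (k+4))
    have b2 := hminsome (0 - 1 : Fin (k+4))
    omega
  · by_cases hn : f none + 1 = c
    · -- minimum at hub: hub inequality fails
      have hb : ∀ i : Fin (k+4), f none - f (some i) ≤ (if i = 0 then -2 else -1) := by
        intro i
        split_ifs with hi
        · subst hi
          have := hminsome 0
          omega
        · have := hminsome i
          omega
      have hsumle : (∑ i : Fin (k+4), (f none - f (some i))) ≤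
          ∑ i : Fin (k+4), (if i = 0 then (-2:ℤ) else -1) :=
        Finset.sum_le_sum fun i _ => hb i
      have hsum : ∑ i : Fin (k+4), (if i = 0 then (-2:ℤ) else -1) = -((k:ℤ) + 5) := by
        rw [Finset.sum_congr rfl
          (fun i _ => show (if i = 0 then (-2:ℤ) else -1) =
            (if i = (0 : Fin (k+4)) then (-1:ℤ) else 0) + (-1) by split_ifs <;> ring)]
        rw [Finset.sum_add_distrib, Finset.sum_ite_eq' Finset.univ, Finset.sum_const]
        simp
        push_cast
        ring
      rw [hsum] at hsumle
      omega
    · -- minimum on the rim away from P₂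
      have hnone' : c + 1 ≤ f none + 1 := by
        have := hmin none
        simp only [hh, Option.elim] at this
        omega
      -- pick rim index attaining the min
      have hex : ∃ i : Fin (k+4), f (some i) = c := by
        rcases v₀ with _ | i
        · exact absurd (by simpa [hh] using hc.symm) hn
        · exact ⟨i, (by simpa [hh] using hc.symm)⟩
      -- find i in the min set whose successor is not
      have hstep : ∃ i : Fin (k+4), f (some i) = c ∧ f (some (i+1)) ≠ c := by
        by_contra hcon
        push_neg at hcon
        obtain ⟨i₀, hi₀⟩ := hex
        have : f (some (0 : Fin (k+4))) = c :=
          walk_lemma k (fun i => f (some i) = c) i₀ hi₀ fun i hi => hcon i hi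
        exact h0 this
      obtain ⟨i, hi, hi1⟩ := hstep
      have := Hsome i
      have b1 : c + 1 ≤ f (some (i+1)) := by
        have := hminsome (i+1); omega
      have b2 := hminsome (i - 1)
      have hif : (if i = 0 then (-2:ℤ) else 0) ≤ 0 := by split_ifs <;> omega
      omega
end
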